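/- Let p ≥ 2 be an integer, let f : E → ℝ have L_p-Lipschitz-continuous p-th derivative, let M ≥ L_p, let x ∈ E, and let x⁺ be a basic p-th order tensor step from x with parameter M. Then for every y ∈ E one has f(x⁺) ≤ f(y) + ((M + L_p)/(p+1)!)·‖y − x‖^{p+1}; in particular (taking y = x) the step is monotone: f(x⁺) ≤ f(x). -/

import Mathlib

open scoped RealInnerProductSpace

section
variable {E : Type*} [NormedAddCommGroup E] [InnerProductSpace ℝ E]

/-- `f` is `μ`-uniformly star-convex of degree `q` with respect to `xs`. -/
def UniformlyStarConvex (f : E → ℝ) (xs : E) (q : ℕ) (μ : ℝ) : Prop :=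
  ∀ x : E, ∀ α : ℝ, 0 ≤ α → α ≤ 1 →
    f (α • x + (1 - α) • xs) ≤
      α * f x + (1 - α) * f xs - α * (1 - α) * μ / q * ‖x - xs‖ ^ q

/-- `f` has `L`-Lipschitz-continuous `p`-th derivative. -/
def HasLipschitzDeriv (f : E → ℝ) (p : ℕ) (L : ℝ) : Prop :=
  ContDiff ℝ p f ∧
    ∀ x y : E, ‖iteratedFDeriv ℝ p f x - iteratedFDeriv ℝ p f y‖ ≤ L * ‖x - y‖

/-- The `p`-th order Taylor polynomial `Φ_{x,p}(y)` of `f` at `x`. -/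
noncomputable def taylorPoly (f : E → ℝ) (p : ℕ) (x y : E) : ℝ :=
  f x + ∑ k ∈ Finset.Icc 1 p,
    (1 / (Nat.factorial k : ℝ)) * iteratedFDeriv ℝ k f x (fun _ => y - x)

/-- The tensor model `Ω_{x,M}(y)`. -/
noncomputable def tensorModel (f : E → ℝ) (p : ℕ) (M : ℝ) (x y : E) : ℝ :=
  taylorPoly f p x y + M / (Nat.factorial (p + 1) : ℝ) * ‖y - x‖ ^ (p + 1)

/-- `xp` is a basic `p`-th order tensor step from `x` with parameter `M`
(a global minimizer of the model). -/
def IsTensorStep (f : E → ℝ) (p : ℕ) (M : ℝ) (x xp : E) : Prop :=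
  ∀ y : E, tensorModel f p M x xp ≤ tensorModel f p M x y

end

/-! ### Auxiliary lemmas -/

lemma itf_translate {E F : Type*} [NormedAddCommGroup E] [NormedSpace ℝ E]
    [NormedAddCommGroup F] [NormedSpace ℝ F]
    (f : E → F) (a : E) (n : ℕ) (hf : ContDiff ℝ n f) (u : E) :
    iteratedFDeriv ℝ n (fun w => f (a + w)) u = iteratedFDeriv ℝ n f (a + u) := by
  induction n generalizing u with
  | zero => ext m; simp
  | succ n IH =>
    have hfn : ContDiff ℝ n f := hf.of_le (by exact_mod_cast Nat.le_succ n)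
    have hdiff : Differentiable ℝ (fun z => iteratedFDeriv ℝ n f z) :=
      hf.differentiable_iteratedFDeriv (by exact_mod_cast Nat.lt_succ_self n)
    have heq : iteratedFDeriv ℝ n (fun w' => f (a + w'))
        = fun w => iteratedFDeriv ℝ n f (a + w) := funext fun w => IH hfn w
    rw [iteratedFDeriv_succ_eq_comp_left, iteratedFDeriv_succ_eq_comp_left]
    have h1 : HasFDerivAt (fun w : E => a + w) (ContinuousLinearMap.id ℝ E) u :=
      (hasFDerivAt_id u).const_add a
    have h2 : HasFDerivAt (fun w => iteratedFDeriv ℝ n f (a + w))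
        (fderiv ℝ (iteratedFDeriv ℝ n f) (a + u)) u := by
      exact ((hdiff (a + u)).hasFDerivAt.comp u h1).congr_fderiv (ContinuousLinearMap.comp_id _)
    simp only [Function.comp]
    rw [heq, h2.fderiv]

lemma line_deriv {E : Type*} [NormedAddCommGroup E] [NormedSpace ℝ E]
    (f : E → ℝ) (n : ℕ) (hf : ContDiff ℝ n f) (x v : E) (t : ℝ) :
    iteratedDeriv n (fun s : ℝ => f (x + s • v)) t
      = iteratedFDeriv ℝ n f (x + t • v) (fun _ => v) := by
  set ℓ : ℝ →L[ℝ] E := (ContinuousLinearMap.id ℝ ℝ).smulRight v with hℓ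
  have hℓ_apply : ∀ s : ℝ, ℓ s = s • v := fun s => rfl
  have hh : ContDiff ℝ n (fun w => f (x + w)) :=
    hf.comp (contDiff_const.add contDiff_id)
  have hcomp : (fun s : ℝ => f (x + s • v)) = (fun w => f (x + w)) ∘ ℓ := rfl
  rw [iteratedDeriv_eq_iteratedFDeriv, hcomp,
    ℓ.iteratedFDeriv_comp_right hh t le_rfl,
    ContinuousMultilinearMap.compContinuousLinearMap_apply,
    itf_translate _ _ _ hf]
  simp [hℓ_apply]

lemma taylor1d (C : ℝ) (hC : 0 ≤ C) :
    ∀ (n m : ℕ) (g : ℝ → ℝ), ContDiff ℝ n g →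
    (∀ t ∈ Set.Icc (0:ℝ) 1, |iteratedDeriv n g t - iteratedDeriv n g 0| ≤ C * t ^ m) →
    ∀ t ∈ Set.Icc (0:ℝ) 1,
      |g t - ∑ k ∈ Finset.range (n+1), iteratedDeriv k g 0 / (Nat.factorial k : ℝ) * t ^ k|
        ≤ C * (Nat.factorial m : ℝ) / (Nat.factorial (m + n) : ℝ) * t ^ (m + n) := by
  intro n
  induction n with
  | zero =>
    intro m g hg hb t ht
    have h1 := hb t ht
    rw [Finset.sum_range_one]
    simp only [iteratedDeriv_zero, pow_zero, Nat.factorial_zero, Nat.cast_one, div_one,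
      mul_one, Nat.add_zero] at h1 ⊢
    rwa [mul_div_assoc, div_self (Nat.cast_ne_zero.mpr m.factorial_ne_zero), mul_one]
  | succ n IH =>
    intro m g hg hb t ht
    have hg1 : ContDiff ℝ ((n : WithTop ℕ∞) + 1) g := by exact_mod_cast hg
    have hg' : ContDiff ℝ n (deriv g) := (contDiff_succ_iff_deriv.mp hg1).2.2
    have hgdiff : Differentiable ℝ g := (contDiff_succ_iff_deriv.mp hg1).1
    have hb' : ∀ s ∈ Set.Icc (0:ℝ) 1,
        |iteratedDeriv n (deriv g) s - iteratedDeriv n (deriv g) 0| ≤ C * s ^ m := by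
      intro s hs
      have := hb s hs
      rwa [iteratedDeriv_succ'] at this
    have hIH := IH m (deriv g) hg' hb'
    -- the Taylor polynomial of g of order n+1
    set P : ℝ → ℝ := fun s =>
      ∑ k ∈ Finset.range (n+2), iteratedDeriv k g 0 / (Nat.factorial k : ℝ) * s ^ k with hP
    have hPdiff : ∀ s : ℝ, DifferentiableAt ℝ P s := by
      intro s
      apply DifferentiableAt.fun_sum
      intro k _
      exact ((differentiable_pow k).const_mul _) s
    have hPderiv : ∀ s : ℝ, deriv P s
        = ∑ k ∈ Finset.range (n+1), iteratedDeriv k (deriv g) 0 / (Nat.factorial k : ℝ) * s ^ k := by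
      intro s
      rw [hP, deriv_fun_sum (fun k _ => ((differentiable_pow k).const_mul _) s)]
      rw [Finset.sum_range_succ']
      have : ∀ k : ℕ, deriv (fun y : ℝ => iteratedDeriv k g 0 / (Nat.factorial k : ℝ) * y ^ k) s
          = iteratedDeriv k g 0 / (Nat.factorial k : ℝ) * (k * s ^ (k-1)) := by
        intro k
        rw [deriv_const_mul _ ((differentiable_pow k) s), deriv_pow_field]
      simp only [this]
      simp only [Nat.cast_zero, zero_mul, mul_zero, add_zero, pow_zero]
      apply Finset.sum_congr rfl
      intro k _
      rw [← iteratedDeriv_succ']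
      have hfac : (Nat.factorial (k+1) : ℝ) = (k+1) * (Nat.factorial k : ℝ) := by
        push_cast [Nat.factorial_succ]; ring
      have hk : (Nat.factorial k : ℝ) ≠ 0 := Nat.cast_ne_zero.mpr k.factorial_ne_zero
      rw [hfac]
      field_simp
      rw [Nat.add_sub_cancel]; push_cast; ring
    set h : ℝ → ℝ := fun s => g s - P s with hh
    have hh0 : h 0 = 0 := by
      have : P 0 = g 0 := by
        show (∑ k ∈ Finset.range (n+2),
          iteratedDeriv k g 0 / (Nat.factorial k : ℝ) * (0:ℝ) ^ k) = g 0
        rw [Finset.sum_eq_single_of_mem 0 (Finset.mem_range.mpr (Nat.succ_pos _))]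
        · simp
        · intro k _ hk
          simp [zero_pow hk]
      simp [hh, this]
    have hhdiff : ∀ s : ℝ, DifferentiableAt ℝ h s := fun s => (hgdiff s).sub (hPdiff s)
    have hhderiv : ∀ s : ℝ, deriv h s = deriv g s - deriv P s := fun s =>
      deriv_sub (hgdiff s) (hPdiff s)
    have hbound : ∀ s ∈ Set.Icc (0:ℝ) 1,
        |deriv h s| ≤ C * (Nat.factorial m : ℝ) / (Nat.factorial (m + n) : ℝ) * s ^ (m + n) := by
      intro s hs
      rw [hhderiv, hPderiv]
      exact hIH s hs
    -- continuity of deriv h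
    have hcont : Continuous (deriv h) := by
      have h1 : Continuous (deriv g) := hg'.continuous
      have h2 : Continuous (deriv P) := by
        rw [funext hPderiv]
        exact continuous_finset_sum _ (fun k _ => continuous_const.mul (continuous_pow k))
      rw [funext hhderiv]
      exact h1.sub h2
    obtain ⟨ht0, ht1⟩ := ht
    have hint : ∫ s in (0:ℝ)..t, deriv h s = h t - h 0 :=
      intervalIntegral.integral_deriv_eq_sub (fun s _ => hhdiff s)
        (hcont.intervalIntegrable 0 t)
    set B := C * (Nat.factorial m : ℝ) / (Nat.factorial (m + n) : ℝ) with hB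
    have hBnn : 0 ≤ B := by
      apply div_nonneg (mul_nonneg hC (Nat.cast_nonneg _)) (Nat.cast_nonneg _)
    have key : |h t| ≤ B * t ^ (m + n + 1) / (m + n + 1) := by
      have habs : ‖∫ s in (0:ℝ)..t, deriv h s‖ ≤ |∫ s in (0:ℝ)..t, B * s ^ (m + n)| := by
        apply intervalIntegral.norm_integral_le_abs_of_norm_le
        · filter_upwards [MeasureTheory.ae_restrict_mem measurableSet_uIoc] with s hs
          rw [Set.uIoc_of_le ht0] at hs
          exact hbound s ⟨le_of_lt hs.1, hs.2.trans ht1⟩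
        · exact ((continuous_const.mul (continuous_pow _)).intervalIntegrable 0 t)
      have hval : ∫ s in (0:ℝ)..t, B * s ^ (m + n) = B * (t ^ (m + n + 1) / (m + n + 1)) := by
        rw [intervalIntegral.integral_const_mul, integral_pow]
        norm_num
      rw [hint, hh0, sub_zero] at habs
      rw [hval] at habs
      have : |B * (t ^ (m + n + 1) / (m + n + 1))| = B * (t ^ (m + n + 1) / (m + n + 1)) := by
        apply abs_of_nonneg
        apply mul_nonneg hBnn
        apply div_nonneg (pow_nonneg ht0 _)
        positivity
      rw [this] at habs
      calc |h t| ≤ B * (t ^ (m + n + 1) / (m + n + 1)) := habs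
        _ = B * t ^ (m + n + 1) / (m + n + 1) := by ring
    have heqfinal : B * t ^ (m + n + 1) / (m + n + 1)
        = C * (Nat.factorial m : ℝ) / (Nat.factorial (m + (n+1)) : ℝ) * t ^ (m + (n+1)) := by
      have h1 : m + (n + 1) = (m + n) + 1 := by ring
      rw [h1]
      have h2 : (Nat.factorial (m + n + 1) : ℝ) = (m + n + 1) * (Nat.factorial (m + n) : ℝ) := by
        push_cast [Nat.factorial_succ]; ring
      rw [hB, h2]
      have h3 : (Nat.factorial (m + n) : ℝ) ≠ 0 := Nat.cast_ne_zero.mpr (m+n).factorial_ne_zero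
      have h4 : ((m : ℝ) + n + 1) ≠ 0 := by positivity
      field_simp
      try exact Or.inl trivial
    calc |g t - ∑ k ∈ Finset.range (n+1+1), iteratedDeriv k g 0 / (Nat.factorial k : ℝ) * t ^ k|
        = |h t| := by rw [hh, hP]
      _ ≤ B * t ^ (m + n + 1) / (m + n + 1) := key
      _ = _ := heqfinal

lemma taylor_bound {E : Type*} [NormedAddCommGroup E] [InnerProductSpace ℝ E]
    (f : E → ℝ) (p : ℕ) (L : ℝ) (hf : HasLipschitzDeriv f p L) (x y : E) :
    |f y - taylorPoly f p x y| ≤ L / (Nat.factorial (p+1) : ℝ) * ‖y - x‖ ^ (p+1) := by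
  obtain ⟨hcd, hlip⟩ := hf
  set v := y - x with hv
  set C := L * ‖v‖ ^ (p+1) with hCdef
  have hC : 0 ≤ C := by
    by_cases hv0 : v = 0
    · simp [hCdef, hv0]
    · have h1 := hlip x (x + v)
      have h2 : ‖x - (x + v)‖ = ‖v‖ := by simp
      have h3 : (0:ℝ) ≤ L * ‖v‖ := le_trans (norm_nonneg _) (h2 ▸ h1)
      have h4 : 0 < ‖v‖ := norm_pos_iff.mpr hv0
      have hL : 0 ≤ L := nonneg_of_mul_nonneg_right (by linarith [h3] : (0:ℝ) ≤ ‖v‖ * L) h4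
      positivity
  set g : ℝ → ℝ := fun t => f (x + t • v) with hg
  have hgc : ContDiff ℝ p g :=
    hcd.comp (contDiff_const.add (contDiff_id.smul contDiff_const))
  have hlin : ∀ k : ℕ, k ≤ p → ∀ t : ℝ,
      iteratedDeriv k g t = iteratedFDeriv ℝ k f (x + t • v) (fun _ => v) :=
    fun k hk t => line_deriv f k (hcd.of_le (by exact_mod_cast hk)) x v t
  have hb : ∀ t ∈ Set.Icc (0:ℝ) 1,
      |iteratedDeriv p g t - iteratedDeriv p g 0| ≤ C * t ^ 1 := by
    intro t ht
    rw [hlin p le_rfl t, hlin p le_rfl 0]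
    simp only [zero_smul, add_zero]
    have h1 : iteratedFDeriv ℝ p f (x + t • v) (fun _ => v)
          - iteratedFDeriv ℝ p f x (fun _ => v)
        = (iteratedFDeriv ℝ p f (x + t • v) - iteratedFDeriv ℝ p f x) (fun _ => v) := by
      simp
    rw [← Real.norm_eq_abs, h1]
    calc ‖(iteratedFDeriv ℝ p f (x + t • v) - iteratedFDeriv ℝ p f x) (fun _ => v)‖
        ≤ ‖iteratedFDeriv ℝ p f (x + t • v) - iteratedFDeriv ℝ p f x‖
            * ∏ _i : Fin p, ‖v‖ :=
          ContinuousMultilinearMap.le_opNorm _ _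
      _ ≤ (L * ‖(x + t • v) - x‖) * ∏ _i : Fin p, ‖v‖ := by
          apply mul_le_mul_of_nonneg_right (hlip _ _)
          exact Finset.prod_nonneg fun _ _ => norm_nonneg _
      _ = C * t ^ 1 := by
          have h2 : ‖(x + t • v) - x‖ = t * ‖v‖ := by
            rw [add_sub_cancel_left, norm_smul, Real.norm_eq_abs, abs_of_nonneg ht.1]
          rw [h2, Finset.prod_const, Finset.card_univ, Fintype.card_fin, hCdef]
          ring
  have key := taylor1d C hC p 1 g hgc hb 1 ⟨zero_le_one, le_refl 1⟩
  have hg1 : g 1 = f y := by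
    simp [hg, hv]
  have hsum : (∑ k ∈ Finset.range (p+1), iteratedDeriv k g 0 / (Nat.factorial k : ℝ) * 1 ^ k)
      = taylorPoly f p x y := by
    have hsplit : Finset.range (p+1) = insert 0 (Finset.Icc 1 p) := by
      ext k; simp [Nat.lt_succ_iff]; omega
    rw [hsplit, Finset.sum_insert (by simp)]
    unfold taylorPoly
    congr 1
    · simp [hlin 0 (Nat.zero_le p) 0]
    · apply Finset.sum_congr rfl
      intro k hk
      have hkp : k ≤ p := (Finset.mem_Icc.mp hk).2
      rw [hlin k hkp 0]
      simp only [zero_smul, add_zero, one_pow, mul_one]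
      ring
  rw [hg1, hsum] at key
  calc |f y - taylorPoly f p x y|
      ≤ C * (Nat.factorial 1 : ℝ) / (Nat.factorial (1 + p) : ℝ) * 1 ^ (1 + p) := key
    _ = L / (Nat.factorial (p+1) : ℝ) * ‖v‖ ^ (p+1) := by
        rw [Nat.add_comm 1 p, Nat.factorial_one, hCdef]
        push_cast
        ring

theorem tensor_step_upper_bound {E : Type*} [NormedAddCommGroup E]
    [InnerProductSpace ℝ E] [FiniteDimensional ℝ E]
    (f : E → ℝ) (p : ℕ) (hp : 2 ≤ p) (L M : ℝ)
    (hf : HasLipschitzDeriv f p L) (hM : L ≤ M)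
    (x xp : E) (hstep : IsTensorStep f p M x xp) :
    (∀ y : E, f xp ≤ f y + (M + L) / (Nat.factorial (p + 1) : ℝ) * ‖y - x‖ ^ (p + 1)) ∧
      f xp ≤ f x := by
  have hfacpos : (0:ℝ) < (Nat.factorial (p+1) : ℝ) :=
    Nat.cast_pos.mpr (Nat.factorial_pos _)
  have main : ∀ y : E, f xp ≤ f y + (M + L) / (Nat.factorial (p + 1) : ℝ) * ‖y - x‖ ^ (p + 1) := by
    intro y
    have h1 := taylor_bound f p L hf x xp
    have h2 := taylor_bound f p L hf x y
    have h1' : f xp ≤ taylorPoly f p x xp + L / (Nat.factorial (p+1) : ℝ) * ‖xp - x‖ ^ (p+1) := by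
      have := (abs_le.mp h1).2
      linarith
    have h2' : taylorPoly f p x y ≤ f y + L / (Nat.factorial (p+1) : ℝ) * ‖y - x‖ ^ (p+1) := by
      have := (abs_le.mp h2).1
      linarith
    have hLM : L / (Nat.factorial (p+1) : ℝ) * ‖xp - x‖ ^ (p+1)
        ≤ M / (Nat.factorial (p+1) : ℝ) * ‖xp - x‖ ^ (p+1) := by
      apply mul_le_mul_of_nonneg_right _ (pow_nonneg (norm_nonneg _) _)
      exact (div_le_div_iff_of_pos_right hfacpos).mpr hM
    have hmodel := hstep y
    unfold tensorModel at hmodel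
    calc f xp ≤ taylorPoly f p x xp + L / (Nat.factorial (p+1) : ℝ) * ‖xp - x‖ ^ (p+1) := h1'
      _ ≤ taylorPoly f p x xp + M / (Nat.factorial (p+1) : ℝ) * ‖xp - x‖ ^ (p+1) := by linarith
      _ ≤ taylorPoly f p x y + M / (Nat.factorial (p+1) : ℝ) * ‖y - x‖ ^ (p+1) := hmodel
      _ ≤ f y + L / (Nat.factorial (p+1) : ℝ) * ‖y - x‖ ^ (p+1)
            + M / (Nat.factorial (p+1) : ℝ) * ‖y - x‖ ^ (p+1) := by linarith
      _ = f y + (M + L) / (Nat.factorial (p + 1) : ℝ) * ‖y - x‖ ^ (p + 1) := by ring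
  refine ⟨main, ?_⟩
  have := main x
  simpa using this
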